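/- arXiv:2105.06935 — 2 statements merged into one kernel-verified Lean document; each statement's English description precedes it below -/
import Mathlib

section
/- Let m ∈ ℕ, let n = 2m+1, and let z ∈ ℕ with 0 ≤ z < 2^n. Then Σ_{x=0}^{2^n-1} i^{w(x)} (-1)^{z·x} = (-1)^{w(z)} · i^{m+w(z)} · 2^m · (1+i), where the sum is taken in ℂ. -/
open Finset

/-- Hamming weight of a natural number: number of 1s in its binary representation. -/
def hw (x : ℕ) : ℕ := (Nat.digits 2 x).sum

/-- The `j`-th bit of `z`, as a natural number in `{0,1}`. -/
def nbit (z j : ℕ) : ℕ := if z.testBit j then 1 else 0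

/-- Partial bitwise dot product `∑_{j=0}^{n-1} z_j x_j`. -/
def ndot (n z x : ℕ) : ℕ := ∑ j ∈ Finset.range n, nbit z j * nbit x j

lemma sum_range_two_mul (N : ℕ) (f : ℕ → ℂ) :
    ∑ x ∈ Finset.range (2 * N), f x = ∑ q ∈ Finset.range N, (f (2 * q) + f (2 * q + 1)) := by
  induction N with
  | zero => simp
  | succ n ih =>
    have h : 2 * (n + 1) = 2 * n + 1 + 1 := by ring
    rw [h, Finset.sum_range_succ, Finset.sum_range_succ, ih, Finset.sum_range_succ]
    ring

lemma hw_two_mul (q : ℕ) : hw (2 * q) = hw q := by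
  rcases Nat.eq_zero_or_pos q with h | h
  · simp [h]
  · unfold hw
    rw [Nat.digits_def' (by norm_num) (by omega)]
    simp [Nat.mul_div_cancel_left, Nat.mul_mod_right]

lemma hw_two_mul_add_one (q : ℕ) : hw (2 * q + 1) = hw q + 1 := by
  unfold hw
  rw [Nat.digits_def' (by norm_num) (by omega)]
  have h1 : (2 * q + 1) % 2 = 1 := by omega
  have h2 : (2 * q + 1) / 2 = q := by omega
  rw [h1, h2]
  simp [Nat.add_comm]

lemma hw_rec (z : ℕ) : hw z = z % 2 + hw (z / 2) := by
  rcases Nat.mod_two_eq_zero_or_one z with h | h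
  · have : z = 2 * (z / 2) := by omega
    rw [h]; conv_lhs => rw [this]
    rw [hw_two_mul]; ring
  · have : z = 2 * (z / 2) + 1 := by omega
    rw [h]; conv_lhs => rw [this]
    rw [hw_two_mul_add_one]; ring

lemma nbit_zero (x : ℕ) : nbit x 0 = x % 2 := by
  unfold nbit
  rcases Nat.mod_two_eq_zero_or_one x with h | h <;>
    simp [Nat.testBit_zero, h] <;> omega

lemma nbit_succ (x j : ℕ) : nbit x (j + 1) = nbit (x / 2) j := by
  simp [nbit, Nat.testBit_succ]

lemma ndot_succ (n z x : ℕ) :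
    ndot (n + 1) z x = nbit z 0 * nbit x 0 + ndot n (z / 2) (x / 2) := by
  unfold ndot
  rw [Finset.sum_range_succ']
  simp [nbit_succ, Nat.add_comm]

lemma hw_eq_sum_nbit : ∀ n z, z < 2 ^ n → hw z = ∑ j ∈ Finset.range n, nbit z j := by
  intro n
  induction n with
  | zero =>
    intro z hz
    interval_cases z
    simp [hw]
  | succ n ih =>
    intro z hz
    rw [Finset.sum_range_succ']
    simp only [nbit_succ, nbit_zero]
    rw [← ih (z / 2) (by omega), hw_rec z]
    ring

lemma key_sum : ∀ n z, ∑ x ∈ Finset.range (2 ^ n), Complex.I ^ hw x * (-1) ^ ndot n z x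
    = ∏ j ∈ Finset.range n, (1 + Complex.I * (-1) ^ nbit z j) := by
  intro n
  induction n with
  | zero => simp [hw, ndot]
  | succ n ih =>
    intro z
    have h2 : (2 : ℕ) ^ (n + 1) = 2 * 2 ^ n := by ring
    rw [h2, sum_range_two_mul]
    have step : ∀ q ∈ Finset.range (2 ^ n),
        (Complex.I ^ hw (2 * q) * (-1) ^ ndot (n + 1) z (2 * q) +
          Complex.I ^ hw (2 * q + 1) * (-1) ^ ndot (n + 1) z (2 * q + 1)) =
        (1 + Complex.I * (-1) ^ nbit z 0) *
          (Complex.I ^ hw q * (-1) ^ ndot n (z / 2) q) := by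
      intro q _
      rw [hw_two_mul, hw_two_mul_add_one, ndot_succ, ndot_succ]
      have e1 : nbit (2 * q) 0 = 0 := by rw [nbit_zero]; omega
      have e2 : nbit (2 * q + 1) 0 = 1 := by rw [nbit_zero]; omega
      have e3 : (2 * q) / 2 = q := by omega
      have e4 : (2 * q + 1) / 2 = q := by omega
      rw [e1, e2, e3, e4]
      rw [pow_add, pow_add, pow_succ]
      ring
    rw [Finset.sum_congr rfl step, ← Finset.mul_sum, ih (z / 2)]
    rw [Finset.prod_range_succ']
    simp only [nbit_succ]
    ring

lemma factor_eq (b : ℕ) (hb : b ≤ 1) :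
    (1 + Complex.I * (-1) ^ b) = (1 + Complex.I) * (-Complex.I) ^ b := by
  interval_cases b
  · ring
  · have := Complex.I_mul_I
    ring_nf
    rw [Complex.I_sq]
    ring

theorem stmt_3 (m : ℕ) (z : ℕ) (hz : z < 2 ^ (2 * m + 1)) :
    ∑ x ∈ Finset.range (2 ^ (2 * m + 1)), Complex.I ^ hw x * (-1) ^ ndot (2 * m + 1) z x =
      (-1) ^ hw z * Complex.I ^ (m + hw z) * 2 ^ m * (1 + Complex.I) := by
  rw [key_sum]
  have hfac : ∀ j ∈ Finset.range (2 * m + 1),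
      (1 + Complex.I * (-1) ^ nbit z j) = (1 + Complex.I) * (-Complex.I) ^ nbit z j := by
    intro j _
    exact factor_eq _ (by unfold nbit; split <;> omega)
  rw [Finset.prod_congr rfl hfac, Finset.prod_mul_distrib, Finset.prod_const,
    Finset.prod_pow_eq_pow_sum, ← hw_eq_sum_nbit _ z hz]
  have h1 : (1 + Complex.I) ^ (2 * m + 1) = (2 * Complex.I) ^ m * (1 + Complex.I) := by
    have : (1 + Complex.I) ^ 2 = 2 * Complex.I := by
      ring_nf; rw [Complex.I_sq]; ring
    rw [pow_add, pow_mul, this, pow_one]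
  rw [Finset.card_range, h1]
  have h2 : (-Complex.I) ^ hw z = (-1) ^ hw z * Complex.I ^ hw z := by
    rw [← neg_one_mul, mul_pow]
  rw [h2, mul_pow, pow_add]
  ring
end

section
/- Let m ∈ ℕ, let n = 2m+1, let y ∈ ℕ with 0 ≤ y < 2^n (note y ≠ ȳ automatically since n is odd) where ȳ = 2^n − 1 − y, and write w̄ = w(y). Then the sum b_y = Σ_{x=0, x∉{y,ȳ}}^{2^n-1} i^{w(x)} (-1)^{x·y}, taken in ℂ, satisfies: b_y = (-1)^{w̄} i^{m+w̄} 2^m (1+i) − i^{w̄}(1+i^{2m+1}) if w̄ is even, and b_y = (-1)^{w̄} i^{m+w̄} 2^m (1+i) + i^{w̄}(1+i^{2m+1}) if w̄ is odd. -/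
open Finset

lemma hw_eq_sum : ∀ n x, x < 2^n → hw x = ∑ j ∈ range n, nbit x j := by
  intro n
  induction n with
  | zero => intro x hx; interval_cases x; simp [hw]
  | succ n ih =>
    intro x hx
    rcases Nat.eq_zero_or_pos x with h0 | h0
    · subst h0; simp [hw, nbit]
    · have hstep : hw x = x % 2 + hw (x / 2) := by
        rw [hw, hw, Nat.digits_def' (by norm_num : 1 < 2) h0]; simp
      have hx2 : x / 2 < 2 ^ n := by
        have : (2:ℕ)^(n+1) = 2^n * 2 := by ring
        omega
      rw [hstep, Finset.sum_range_succ', ih _ hx2]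
      have h1 : ∀ j ∈ range n, nbit (x/2) j = nbit x (j+1) := by
        intro j _; simp [nbit, Nat.testBit_add_one]
      rw [Finset.sum_congr rfl h1]
      have h2 : nbit x 0 = x % 2 := by
        simp only [nbit, Nat.testBit_zero]
        rcases Nat.mod_two_eq_zero_or_one x with h|h <;> simp [h]
      omega

lemma nbit_high {x n j : ℕ} (hx : x < 2^n) (hj : j < n) :
    nbit (2^n + x) j = nbit x j := by
  simp [nbit, Nat.testBit_two_pow_add_gt hj]

lemma nbit_top {x n : ℕ} (hx : x < 2^n) : nbit (2^n + x) n = 1 := by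
  simp [nbit, Nat.testBit_two_pow_add_eq, Nat.testBit_lt_two_pow hx]

lemma nbit_lt {x n : ℕ} (hx : x < 2^n) : nbit x n = 0 := by
  simp [nbit, Nat.testBit_lt_two_pow hx]

lemma hw_add_pow {x n : ℕ} (hx : x < 2^n) : hw (2^n + x) = hw x + 1 := by
  have hb : 2^n + x < 2^(n+1) := by
    have : (2:ℕ)^(n+1) = 2^n * 2 := by ring
    omega
  rw [hw_eq_sum (n+1) _ hb, hw_eq_sum n x hx, Finset.sum_range_succ,
    Finset.sum_congr rfl (fun j hj => nbit_high hx (mem_range.mp hj)), nbit_top hx]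

lemma ndot_lt {x y n : ℕ} (hx : x < 2^n) :
    ndot (n+1) x y = ndot n x y := by
  rw [ndot, ndot, Finset.sum_range_succ, nbit_lt hx]; ring

lemma ndot_high {x y n : ℕ} (hx : x < 2^n) :
    ndot (n+1) (2^n + x) y = ndot n x y + nbit y n := by
  rw [ndot, ndot, Finset.sum_range_succ,
    Finset.sum_congr rfl (fun j hj => by rw [nbit_high hx (mem_range.mp hj)]),
    nbit_top hx, one_mul]

lemma sum_eq_prod (y : ℕ) : ∀ n, ∑ x ∈ range (2^n), (Complex.I ^ hw x * (-1) ^ ndot n x y) =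
    ∏ j ∈ range n, (1 + Complex.I * (-1)^(nbit y j)) := by
  intro n
  induction n with
  | zero => simp [hw, ndot]
  | succ n ih =>
    have h2 : (2:ℕ)^(n+1) = 2^n + 2^n := by ring
    have hdisj : Disjoint (range (2^n)) ((range (2^n)).map (addLeftEmbedding (2^n))) := by
      simp only [Finset.disjoint_left, Finset.mem_map, mem_range, addLeftEmbedding_apply]
      rintro a ha ⟨b, hb, rfl⟩; omega
    rw [h2, Finset.range_add, Finset.sum_union hdisj, Finset.sum_map]
    have e1 : ∀ x ∈ range (2^n), Complex.I ^ hw x * (-1) ^ ndot (n+1) x y =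
        Complex.I ^ hw x * (-1) ^ ndot n x y := by
      intro x hx; rw [ndot_lt (mem_range.mp hx)]
    have e2 : ∀ x ∈ range (2^n),
        Complex.I ^ hw (addLeftEmbedding (2^n) x) * (-1) ^ ndot (n+1) (addLeftEmbedding (2^n) x) y =
        (Complex.I * (-1)^(nbit y n)) * (Complex.I ^ hw x * (-1) ^ ndot n x y) := by
      intro x hx
      have hx' := mem_range.mp hx
      simp only [addLeftEmbedding_apply]
      rw [hw_add_pow hx', ndot_high hx', pow_succ, pow_add]
      ring
    rw [Finset.sum_congr rfl e1, Finset.sum_congr rfl e2, ← Finset.mul_sum, ih,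
      Finset.prod_range_succ]
    ring

lemma prod_eval (y n : ℕ) :
    ∏ j ∈ range n, (1 + Complex.I * (-1)^(nbit y j)) =
      (1+Complex.I)^(n - ∑ j ∈ range n, nbit y j) *
      (1-Complex.I)^(∑ j ∈ range n, nbit y j) := by
  induction n with
  | zero => simp
  | succ n ih =>
    rw [Finset.prod_range_succ, Finset.sum_range_succ, ih]
    have hle : ∑ j ∈ range n, nbit y j ≤ n := by
      calc ∑ j ∈ range n, nbit y j ≤ ∑ j ∈ range n, 1 :=
        Finset.sum_le_sum (fun j _ => by unfold nbit; split <;> simp)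
      _ = n := by simp
    by_cases h : y.testBit n
    · have : nbit y n = 1 := by simp [nbit, h]
      rw [this]
      have e : n + 1 - (∑ j ∈ range n, nbit y j + 1) = n - ∑ j ∈ range n, nbit y j := by omega
      rw [e, pow_succ]
      ring
    · have : nbit y n = 0 := by simp [nbit, h]
      rw [this]
      have e : n + 1 - (∑ j ∈ range n, nbit y j + 0) = (n - ∑ j ∈ range n, nbit y j) + 1 := by omega
      rw [e, pow_succ]
      ring

open Complex in
lemma alg1 (m w k : ℕ) (h : k + w = 2*m+1) :
    (1+I)^k * (1-I)^w = (-1)^w * I^(m+w) * 2^m * (1+I) := by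
  have h1 : (1 - I : ℂ) = -I * (1+I) := by linear_combination Complex.I_sq
  have h2 : ((1:ℂ)+I)^2 = 2*I := by linear_combination Complex.I_sq
  calc (1+I)^k * (1-I)^w = (-I)^w * (1+I)^(k+w) := by rw [h1, mul_pow, pow_add]; ring
    _ = (-I)^w * (((1+I)^2)^m * (1+I)) := by rw [h, pow_succ, pow_mul]
    _ = (-I)^w * ((2*I)^m * (1+I)) := by rw [h2]
    _ = (-1)^w * I^(m+w) * 2^m * (1+I) := by
        rw [show (-I : ℂ) = (-1) * I by ring, mul_pow, mul_pow, pow_add]; ring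

open Complex in
lemma alg2 (m w k : ℕ) (h : k + w = 2*m+1) :
    (I:ℂ)^k = I^(2*m+1) * ((-1)^w * I^w) := by
  have hu : ((-1:ℂ))^w * I^w * I^w = 1 := by
    rw [← mul_pow, ← mul_pow]
    rw [show (-1:ℂ) * I * I = 1 by linear_combination -Complex.I_sq, one_pow]
  symm
  calc (I:ℂ)^(2*m+1) * ((-1)^w * I^w) = I^k * ((-1)^w * I^w * I^w) := by
        rw [← h, pow_add]; ring
    _ = I^k := by rw [hu, mul_one]


open Complex in
theorem stmt_12 (m : ℕ) (y : ℕ) (hy : y < 2 ^ (2 * m + 1)) :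
    (Even (hw y) →
      ∑ x ∈ (Finset.range (2 ^ (2 * m + 1))).filter
          (fun x => x ≠ y ∧ x ≠ 2 ^ (2 * m + 1) - 1 - y),
        Complex.I ^ hw x * (-1) ^ ndot (2 * m + 1) x y =
      (-1) ^ hw y * Complex.I ^ (m + hw y) * 2 ^ m * (1 + Complex.I) -
        Complex.I ^ hw y * (1 + Complex.I ^ (2 * m + 1))) ∧
    (Odd (hw y) →
      ∑ x ∈ (Finset.range (2 ^ (2 * m + 1))).filter
          (fun x => x ≠ y ∧ x ≠ 2 ^ (2 * m + 1) - 1 - y),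
        Complex.I ^ hw x * (-1) ^ ndot (2 * m + 1) x y =
      (-1) ^ hw y * Complex.I ^ (m + hw y) * 2 ^ m * (1 + Complex.I) +
        Complex.I ^ hw y * (1 + Complex.I ^ (2 * m + 1))) := by
  set n := 2 * m + 1 with hn
  set yb := 2 ^ n - 1 - y with hyb
  have hN1 : (1:ℕ) ≤ 2^n := Nat.one_le_two_pow
  have hNeven : 2 ∣ 2^n := dvd_pow_self 2 (by omega)
  have hybs : yb = 2^n - (y + 1) := by omega
  -- complement bits
  have hcb : ∀ j < n, nbit yb j = 1 - nbit y j := by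
    intro j hj
    rw [hybs]
    unfold nbit
    rw [Nat.testBit_two_pow_sub_succ hy]
    by_cases h : y.testBit j <;> simp [h, hj]
  have hyblt : yb < 2^n := by omega
  -- weights as sums
  have hwy : hw y = ∑ j ∈ range n, nbit y j := hw_eq_sum n y hy
  have hwyb : hw yb = ∑ j ∈ range n, nbit yb j := hw_eq_sum n yb hyblt
  have hble : ∀ j, nbit y j ≤ 1 := fun j => by unfold nbit; split <;> simp
  have hwle : hw y ≤ n := by
    rw [hwy]
    calc ∑ j ∈ range n, nbit y j ≤ ∑ j ∈ range n, 1 := Finset.sum_le_sum (fun j _ => hble j)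
      _ = n := by simp
  -- hw yb = n - hw y
  have hsum : hw yb + hw y = n := by
    rw [hwy, hwyb, ← Finset.sum_add_distrib]
    have hterm : ∀ j ∈ range n, nbit yb j + nbit y j = 1 := by
      intro j hj
      have h1 := hble j
      rw [hcb j (mem_range.mp hj)]
      omega
    rw [Finset.sum_congr rfl hterm]
    simp
  -- ndot y y = hw y
  have hdyy : ndot n y y = hw y := by
    rw [ndot, hwy]
    exact Finset.sum_congr rfl (fun j _ => by by_cases h : y.testBit j <;> simp [nbit, h])
  -- ndot yb y = 0
  have hdyby : ndot n yb y = 0 := by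
    rw [ndot]
    apply Finset.sum_eq_zero
    intro j hj
    rw [hcb j (mem_range.mp hj)]
    by_cases h : y.testBit j <;> simp [nbit, h]
  -- y ≠ yb
  have hne : y ≠ yb := by omega
  -- set manipulation
  have hset : (Finset.range (2 ^ n)).filter (fun x => x ≠ y ∧ x ≠ yb) =
      Finset.range (2^n) \ {y, yb} := by
    ext a
    simp only [Finset.mem_filter, Finset.mem_sdiff, Finset.mem_insert, Finset.mem_singleton]
    tauto
  have hsub : ({y, yb} : Finset ℕ) ⊆ range (2^n) := by
    intro a ha
    simp only [Finset.mem_insert, Finset.mem_singleton] at ha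
    rcases ha with rfl | rfl <;> simp [mem_range, hy, hyblt]
  have hsd := Finset.sum_sdiff (f := fun x => Complex.I ^ hw x * (-1) ^ ndot n x y) hsub
  have hpair : ∑ x ∈ ({y, yb} : Finset ℕ), Complex.I ^ hw x * (-1) ^ ndot n x y =
      Complex.I ^ hw y * (-1) ^ hw y + Complex.I ^ hw yb := by
    rw [Finset.sum_pair hne, hdyy, hdyby]
    simp
  set k := hw yb with hk
  have hkw : k + hw y = 2*m+1 := hsum
  have hfull : ∑ x ∈ range (2^n), Complex.I ^ hw x * (-1) ^ ndot n x y =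
      (-1)^(hw y) * I^(m + hw y) * 2^m * (1+I) := by
    rw [sum_eq_prod y n, prod_eval y n, ← hwy]
    have : n - hw y = k := by omega
    rw [this]
    exact alg1 m (hw y) k hkw
  have hS : ∑ x ∈ (Finset.range (2 ^ n)).filter (fun x => x ≠ y ∧ x ≠ yb),
      Complex.I ^ hw x * (-1) ^ ndot n x y =
      (-1)^(hw y) * I^(m + hw y) * 2^m * (1+I)
        - Complex.I ^ hw y * (-1) ^ hw y - Complex.I ^ k := by
    rw [hset]
    rw [hpair] at hsd
    rw [← hfull]
    linear_combination hsd
  rw [hS, alg2 m (hw y) k hkw]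
  constructor
  · intro he
    rw [he.neg_one_pow]
    ring
  · intro ho
    rw [ho.neg_one_pow]
    ring
end
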